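/- Let (a,b) and (c,d) be two pairs of points of ℝ² with a ≠ b, c ≠ d and (a,b) ≠ (c,d). Then ‖a − c‖ = ‖b − d‖ if and only if the lines ℓ_{a,b} and ℓ_{c,d} in ℝ³ either intersect or are parallel (i.e., ℓ_{a,b} ∩ ℓ_{c,d} ≠ ∅, or the two lines are disjoint with parallel direction vectors). -/

import Mathlib

/-- Points of the plane `ℝ²` with the Euclidean norm. -/
abbrev Pt := EuclideanSpace ℝ (Fin 2)

/-- Counterclockwise rotation of a vector of `ℝ²` by `π/2`: `(x, y)^⊥ = (-y, x)`. -/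
noncomputable def perp (v : Pt) : Pt := WithLp.toLp 2 ![-(v 1), v 0]

/-- The line `ℓ_{a,b} = { ((a+b)/2 + t·((a−b)/2)^⊥, t) : t ∈ ℝ }` in `ℝ³ = ℝ² × ℝ`. -/
noncomputable def lineOf (a b : Pt) : Set (Pt × ℝ) :=
  {x | ∃ t : ℝ, x = ((2⁻¹ : ℝ) • (a + b) + t • perp ((2⁻¹ : ℝ) • (a - b)), t)}

/-- The direction vector `(((a−b)/2)^⊥, 1)` of the line `ℓ_{a,b}`. -/
noncomputable def dirOf (a b : Pt) : Pt × ℝ := (perp ((2⁻¹ : ℝ) • (a - b)), 1)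

lemma pt_eq_iff (x y : Pt) : x = y ↔ x 0 = y 0 ∧ x 1 = y 1 := by
  constructor
  · rintro rfl; exact ⟨rfl, rfl⟩
  · rintro ⟨h0, h1⟩
    ext i
    fin_cases i
    · exact h0
    · exact h1

lemma inter_iff (a b c d : Pt) :
    (lineOf a b ∩ lineOf c d).Nonempty ↔
      ∃ t : ℝ, (2⁻¹:ℝ) • (a + b) + t • perp ((2⁻¹:ℝ) • (a - b))
        = (2⁻¹:ℝ) • (c + d) + t • perp ((2⁻¹:ℝ) • (c - d)) := by
  constructor
  · rintro ⟨x, ⟨t, rfl⟩, ⟨s, hs⟩⟩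
    have h2 : t = s := congrArg Prod.snd hs
    subst h2
    exact ⟨t, congrArg Prod.fst hs⟩
  · rintro ⟨t, ht⟩
    exact ⟨_, ⟨t, rfl⟩, ⟨t, by rw [ht]⟩⟩

lemma par_iff (a b c d : Pt) :
    (∃ s : ℝ, s ≠ 0 ∧ dirOf a b = s • dirOf c d) ↔ a - b = c - d := by
  constructor
  · rintro ⟨s, hs, h⟩
    have h2 : (1:ℝ) = s * 1 := congrArg Prod.snd h
    have hs1 : s = 1 := by linarith
    subst hs1
    have h1 : perp ((2⁻¹:ℝ) • (a - b)) = perp ((2⁻¹:ℝ) • (c - d)) := by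
      simpa [dirOf] using congrArg Prod.fst h
    have e0 := congrArg (fun v : Pt => v 0) h1
    have e1 := congrArg (fun v : Pt => v 1) h1
    simp [perp] at e0 e1
    rw [pt_eq_iff]
    constructor
    · have := e1; simp [PiLp.sub_apply] at this ⊢; linarith
    · have := e0; simp [PiLp.sub_apply] at this ⊢; linarith
  · intro h
    exact ⟨1, one_ne_zero, by simp [dirOf, h]⟩

lemma core (a0 a1 b0 b1 c0 c1 d0 d1 : ℝ) :
    (a0-c0)^2+(a1-c1)^2 = (b0-d0)^2+(b1-d1)^2 ↔
      ((∃ t:ℝ, 2⁻¹*(a0+b0) + t*(-(2⁻¹*(a1-b1))) = 2⁻¹*(c0+d0) + t*(-(2⁻¹*(c1-d1))) ∧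
         2⁻¹*(a1+b1) + t*(2⁻¹*(a0-b0)) = 2⁻¹*(c1+d1) + t*(2⁻¹*(c0-d0))) ∨
       (a0-b0 = c0-d0 ∧ a1-b1 = c1-d1)) := by
  constructor
  · intro h
    by_cases hQ : a0-b0-c0+d0 = 0 ∧ a1-b1-c1+d1 = 0
    · right; exact ⟨by linarith [hQ.1], by linarith [hQ.2]⟩
    · left
      by_cases hQ1 : a1-b1-c1+d1 = 0
      · have hQ0 : a0-b0-c0+d0 ≠ 0 := fun h0 => hQ ⟨h0, hQ1⟩
        have key : (a0+b0-c0-d0)*(a0-b0-c0+d0) = 0 := by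
          linear_combination h - (a1+b1-c1-d1)*hQ1
        have hP0 : a0+b0-c0-d0 = 0 := by
          rcases mul_eq_zero.mp key with h'|h'
          · exact h'
          · exact absurd h' hQ0
        refine ⟨-(a1+b1-c1-d1)/(a0-b0-c0+d0), ?_, ?_⟩
        · linear_combination (2⁻¹:ℝ)*hP0 - (-(a1+b1-c1-d1)/(a0-b0-c0+d0))*2⁻¹*hQ1
        · field_simp
          ring
      · have ht : (a0+b0-c0-d0)/(a1-b1-c1+d1) * (a1-b1-c1+d1) = a0+b0-c0-d0 :=
          div_mul_cancel₀ _ hQ1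
        refine ⟨(a0+b0-c0-d0)/(a1-b1-c1+d1), ?_, ?_⟩
        · linear_combination (-(2⁻¹:ℝ))*ht
        · have h2 : (a1-b1-c1+d1) * (2⁻¹*(a1+b1) + (a0+b0-c0-d0)/(a1-b1-c1+d1)*(2⁻¹*(a0-b0)))
              = (a1-b1-c1+d1) * (2⁻¹*(c1+d1) + (a0+b0-c0-d0)/(a1-b1-c1+d1)*(2⁻¹*(c0-d0))) := by
            linear_combination (2⁻¹:ℝ)*h + (2⁻¹*(a0-b0-c0+d0))*ht
          exact mul_left_cancel₀ hQ1 h2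
  · rintro (⟨t, h1, h2⟩|⟨h1, h2⟩)
    · linear_combination (2*(a0-b0-c0+d0))*h1 + (2*(a1-b1-c1+d1))*h2
    · linear_combination (a0-c0+b0-d0)*h1 + (a1-c1+b1-d1)*h2

lemma norm_eq_iff_sq (x y : Pt) : ‖x‖ = ‖y‖ ↔ ‖x‖^2 = ‖y‖^2 := by
  constructor
  · intro h; rw [h]
  · intro h
    rw [← Real.sqrt_sq (norm_nonneg x), ← Real.sqrt_sq (norm_nonneg y), h]

lemma norm_sq_coord (x : Pt) : ‖x‖^2 = (x 0)^2 + (x 1)^2 := by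
  rw [EuclideanSpace.norm_eq, Real.sq_sqrt (by positivity)]
  simp [Fin.sum_univ_two, sq_abs]


/-- For pairs `(a,b) ≠ (c,d)` of points of `ℝ²` with `a ≠ b` and `c ≠ d`,
one has `‖a − c‖ = ‖b − d‖` iff the lines `ℓ_{a,b}` and `ℓ_{c,d}` intersect or are
parallel (disjoint with parallel direction vectors). -/
theorem dist_eq_iff_lines_intersect_or_parallel
    (a b c d : Pt) (hab : a ≠ b) (hcd : c ≠ d) (hne : (a, b) ≠ (c, d)) :
    ‖a - c‖ = ‖b - d‖ ↔
      ((lineOf a b ∩ lineOf c d).Nonempty ∨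
        (Disjoint (lineOf a b) (lineOf c d) ∧
          ∃ s : ℝ, s ≠ 0 ∧ dirOf a b = s • dirOf c d)) := by
  have hRHS : ((lineOf a b ∩ lineOf c d).Nonempty ∨
        (Disjoint (lineOf a b) (lineOf c d) ∧
          ∃ s : ℝ, s ≠ 0 ∧ dirOf a b = s • dirOf c d)) ↔
      ((lineOf a b ∩ lineOf c d).Nonempty ∨ a - b = c - d) := by
    constructor
    · rintro (h|⟨_, hp⟩)
      · exact Or.inl h
      · exact Or.inr ((par_iff a b c d).mp hp)
    · rintro (h|h)
      · exact Or.inl h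
      · by_cases hn : (lineOf a b ∩ lineOf c d).Nonempty
        · exact Or.inl hn
        · exact Or.inr ⟨Set.disjoint_iff_inter_eq_empty.mpr
            (Set.not_nonempty_iff_eq_empty.mp hn), (par_iff a b c d).mpr h⟩
  rw [hRHS, inter_iff, norm_eq_iff_sq, norm_sq_coord, norm_sq_coord]
  have hc := core (a 0) (a 1) (b 0) (b 1) (c 0) (c 1) (d 0) (d 1)
  rw [show ((a-c) 0 : ℝ) = a 0 - c 0 from rfl, show ((a-c) 1 : ℝ) = a 1 - c 1 from rfl,
    show ((b-d) 0 : ℝ) = b 0 - d 0 from rfl, show ((b-d) 1 : ℝ) = b 1 - d 1 from rfl, hc]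
  constructor
  · rintro (⟨t, h1, h2⟩|⟨h1, h2⟩)
    · left
      refine ⟨t, ?_⟩
      rw [pt_eq_iff]
      constructor
      · simp [perp, PiLp.add_apply, PiLp.smul_apply, PiLp.sub_apply]
        linear_combination h1
      · simp [perp, PiLp.add_apply, PiLp.smul_apply, PiLp.sub_apply]
        linear_combination h2
    · right
      rw [pt_eq_iff]
      exact ⟨by simpa [PiLp.sub_apply] using h1, by simpa [PiLp.sub_apply] using h2⟩
  · rintro (⟨t, h⟩|h)
    · left
      refine ⟨t, ?_, ?_⟩
      · have := congrArg (fun v : Pt => v 0) h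
        simp [perp, PiLp.add_apply, PiLp.smul_apply, PiLp.sub_apply] at this
        linear_combination this
      · have := congrArg (fun v : Pt => v 1) h
        simp [perp, PiLp.add_apply, PiLp.smul_apply, PiLp.sub_apply] at this
        linear_combination this
    · right
      have h0 := congrArg (fun v : Pt => v 0) h
      have h1 := congrArg (fun v : Pt => v 1) h
      exact ⟨by simpa [PiLp.sub_apply] using h0, by simpa [PiLp.sub_apply] using h1⟩
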